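/- Let G be a minimally k-factor-critical graph of order n ≥ k + 5 with maximum degree n − 2. Then G has at most two vertices of degree n − 2, and any two such vertices are nonadjacent. -/

import Mathlib

open SimpleGraph

variable {V : Type*}

/-- `G` has a perfect matching covering exactly the vertex set `A`
(i.e. the graph obtained from `G` by deleting the vertices outside `A` has a perfect matching). -/
def HasPMOn (G : SimpleGraph V) (A : Set V) : Prop :=
  ∃ M : G.Subgraph, M.verts = A ∧ M.IsMatching

/-- `G` is `k`-factor-critical: deleting any `k` vertices leaves a graph with a perfect matching. -/
def FactorCritical [Fintype V] (G : SimpleGraph V) (k : ℕ) : Prop :=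
  ∀ S : Finset V, S.card = k → HasPMOn G ((↑S : Set V)ᶜ)

/-- `G` is minimally `k`-factor-critical. -/
def MinFactorCritical [Fintype V] (G : SimpleGraph V) (k : ℕ) : Prop :=
  FactorCritical G k ∧ ∀ u v : V, G.Adj u v → ¬ FactorCritical (G.deleteEdges {s(u,v)}) k

/-- The number of odd connected components of a graph. -/
noncomputable def oddComponents {W : Type*} (G : SimpleGraph W) : ℕ :=
  Nat.card {c : G.ConnectedComponent // Odd (Nat.card c.supp)}

lemma matching_unique {G : SimpleGraph V} {M : G.Subgraph} (hM : M.IsMatching)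
    {x y z : V} (h1 : M.Adj x y) (h2 : M.Adj x z) : y = z := by
  obtain ⟨w, -, hw⟩ := hM (M.edge_vert h1)
  rw [hw y h1, hw z h2]

lemma matching_avoid {G : SimpleGraph V} {u v : V} {A : Set V}
    (h : ¬ HasPMOn (G.deleteEdges {s(u,v)}) A)
    (M : G.Subgraph) (hverts : M.verts = A) (hM : M.IsMatching) : M.Adj u v := by
  by_contra hMuv
  refine h ⟨{ verts := M.verts, Adj := M.Adj, adj_sub := ?_,
              edge_vert := fun h => M.edge_vert h, symm := M.symm }, hverts, hM⟩
  intro x y hxy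
  rw [SimpleGraph.deleteEdges_adj]
  refine ⟨M.adj_sub hxy, ?_⟩
  simp only [Set.mem_singleton_iff]
  intro hs
  rcases Sym2.eq_iff.mp hs with ⟨rfl, rfl⟩ | ⟨rfl, rfl⟩
  · exact hMuv hxy
  · exact hMuv hxy.symm

lemma unique_nonneighbor [Fintype V] [DecidableEq V] {G : SimpleGraph V} [DecidableRel G.Adj]
    {u : V} {n : ℕ} (hn : Fintype.card V = n) (h5 : 2 ≤ n) (hdeg : G.degree u = n - 2) :
    ∃ u', u' ≠ u ∧ ∀ x, ¬ G.Adj u x → x = u ∨ x = u' := by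
  classical
  set T := Finset.univ.filter (fun x => ¬ G.Adj u x) with hT
  have hsum : (Finset.univ.filter (fun x => G.Adj u x)).card + T.card = n := by
    rw [hT, Finset.card_filter_add_card_filter_not, Finset.card_univ, hn]
  have hdeg' : (Finset.univ.filter (fun x => G.Adj u x)).card = n - 2 := by
    rw [← hdeg, SimpleGraph.degree, SimpleGraph.neighborFinset_eq_filter]
  have hcardT : T.card = 2 := by omega
  obtain ⟨x, y, hxy, hTxy⟩ := Finset.card_eq_two.mp hcardT
  have huT : u ∈ T := by simp [hT]
  rw [hTxy] at huT
  simp only [Finset.mem_insert, Finset.mem_singleton] at huT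
  rcases huT with rfl | rfl
  · exact ⟨y, hxy.symm, fun z hz => by
      have : z ∈ T := by simp [hT, hz]
      rw [hTxy] at this; simpa using this⟩
  · refine ⟨x, hxy, fun z hz => ?_⟩
    have : z ∈ T := by simp [hT, hz]
    rw [hTxy] at this
    simp only [Finset.mem_insert, Finset.mem_singleton] at this
    tauto

lemma swap_matching {G : SimpleGraph V} {M : G.Subgraph} (hM : M.IsMatching)
    {u v a b : V} (huv : M.Adj u v) (hab : M.Adj a b)
    (hau : a ≠ u) (hav : a ≠ v) (hbu : b ≠ u) (hbv : b ≠ v)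
    (hua : G.Adj u a) (hvb : G.Adj v b) :
    ∃ M' : G.Subgraph, M'.verts = M.verts ∧ M'.IsMatching ∧ ¬ M'.Adj u v := by
  have hne_uv : u ≠ v := (M.adj_sub huv).ne
  have hne_ab : a ≠ b := (M.adj_sub hab).ne
  refine ⟨{ verts := M.verts
            Adj := fun x y => (M.Adj x y ∧ s(x,y) ≠ s(u,v) ∧ s(x,y) ≠ s(a,b)) ∨
              s(x,y) = s(u,a) ∨ s(x,y) = s(v,b)
            adj_sub := ?_
            edge_vert := ?_
            symm := ?_ }, rfl, ?_, ?_⟩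
  · rintro x y (⟨h1, -, -⟩ | h | h)
    · exact M.adj_sub h1
    · rcases Sym2.eq_iff.mp h with ⟨rfl, rfl⟩ | ⟨rfl, rfl⟩
      · exact hua
      · exact hua.symm
    · rcases Sym2.eq_iff.mp h with ⟨rfl, rfl⟩ | ⟨rfl, rfl⟩
      · exact hvb
      · exact hvb.symm
  · rintro x y (⟨h1, -, -⟩ | h | h)
    · exact M.edge_vert h1
    · rcases Sym2.eq_iff.mp h with ⟨rfl, rfl⟩ | ⟨rfl, rfl⟩
      · exact M.edge_vert huv
      · exact M.edge_vert hab
    · rcases Sym2.eq_iff.mp h with ⟨rfl, rfl⟩ | ⟨rfl, rfl⟩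
      · exact M.edge_vert (huv.symm)
      · exact M.edge_vert (hab.symm)
  · constructor
    rintro x y (⟨h1, h2, h3⟩ | h | h)
    · exact Or.inl ⟨h1.symm, by rwa [Sym2.eq_swap], by rwa [Sym2.eq_swap]⟩
    · exact Or.inr (Or.inl (by rwa [Sym2.eq_swap]))
    · exact Or.inr (Or.inr (by rwa [Sym2.eq_swap]))
  · intro x hx
    by_cases hxu : x = u
    · subst hxu
      refine ⟨a, Or.inr (Or.inl rfl), ?_⟩
      rintro y (⟨h1, h2, -⟩ | h | h)
      · exact absurd (by rw [matching_unique hM h1 huv]) h2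
      · rcases Sym2.eq_iff.mp h with ⟨-, rfl⟩ | ⟨h', rfl⟩
        · rfl
        · exact absurd h'.symm hau
      · rcases Sym2.eq_iff.mp h with ⟨h', -⟩ | ⟨h', -⟩
        · exact absurd h' hne_uv
        · exact absurd h'.symm hbu
    by_cases hxa : x = a
    · subst hxa
      refine ⟨u, Or.inr (Or.inl Sym2.eq_swap), ?_⟩
      rintro y (⟨h1, -, h3⟩ | h | h)
      · exact absurd (by rw [matching_unique hM h1 hab]) h3
      · rcases Sym2.eq_iff.mp h with ⟨h', -⟩ | ⟨-, rfl⟩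
        · exact absurd h' hau
        · rfl
      · rcases Sym2.eq_iff.mp h with ⟨h', -⟩ | ⟨h', -⟩
        · exact absurd h' hav
        · exact absurd h' hne_ab
    by_cases hxv : x = v
    · subst hxv
      refine ⟨b, Or.inr (Or.inr rfl), ?_⟩
      rintro y (⟨h1, h2, -⟩ | h | h)
      · exact absurd (by rw [matching_unique hM h1 huv.symm]; exact Sym2.eq_swap) h2
      · rcases Sym2.eq_iff.mp h with ⟨h', -⟩ | ⟨h', -⟩
        · exact absurd h'.symm hne_uv
        · exact absurd h'.symm hav
      · rcases Sym2.eq_iff.mp h with ⟨-, rfl⟩ | ⟨h', rfl⟩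
        · rfl
        · exact absurd h'.symm hbv
    by_cases hxb : x = b
    · subst hxb
      refine ⟨v, Or.inr (Or.inr Sym2.eq_swap), ?_⟩
      rintro y (⟨h1, -, h3⟩ | h | h)
      · exact absurd (by rw [matching_unique hM h1 hab.symm]; exact Sym2.eq_swap) h3
      · rcases Sym2.eq_iff.mp h with ⟨h', -⟩ | ⟨h', -⟩
        · exact absurd h' hbu
        · exact absurd h'.symm hne_ab
      · rcases Sym2.eq_iff.mp h with ⟨h', -⟩ | ⟨-, rfl⟩
        · exact absurd h' hbv
        · rfl
    · obtain ⟨y, hxy, -⟩ := hM hx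
      have hyu : y ≠ u := fun h => hxv (matching_unique hM (h ▸ hxy).symm huv)
      have hyv : y ≠ v := fun h => hxu (matching_unique hM (h ▸ hxy).symm huv.symm)
      have hya : y ≠ a := fun h => hxb (matching_unique hM (h ▸ hxy).symm hab)
      have hyb : y ≠ b := fun h => hxa (matching_unique hM (h ▸ hxy).symm hab.symm)
      refine ⟨y, Or.inl ⟨hxy, ?_, ?_⟩, ?_⟩
      · intro h
        rcases Sym2.eq_iff.mp h with ⟨h', -⟩ | ⟨h', -⟩
        · exact hxu h'
        · exact hxv h'
      · intro h
        rcases Sym2.eq_iff.mp h with ⟨h', -⟩ | ⟨h', -⟩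
        · exact hxa h'
        · exact hxb h'
      · rintro z (⟨h1, -, -⟩ | h | h)
        · exact matching_unique hM h1 hxy
        · rcases Sym2.eq_iff.mp h with ⟨h', -⟩ | ⟨h', -⟩
          · exact absurd h' hxu
          · exact absurd h' hxa
        · rcases Sym2.eq_iff.mp h with ⟨h', -⟩ | ⟨h', -⟩
          · exact absurd h' hxv
          · exact absurd h' hxb
  · rintro (⟨-, h2, -⟩ | h | h)
    · exact h2 rfl
    · rcases Sym2.eq_iff.mp h with ⟨-, h'⟩ | ⟨h', -⟩
      · exact hav h'.symm
      · exact hau h'.symm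
    · rcases Sym2.eq_iff.mp h with ⟨h', -⟩ | ⟨h', -⟩
      · exact hne_uv h'
      · exact hbu h'.symm

theorem minFactorCritical_maxDegree_n_sub_two [Fintype V] [DecidableEq V]
    (G : SimpleGraph V) [DecidableRel G.Adj] (n k : ℕ)
    (hn : Fintype.card V = n) (hnk : n ≥ k + 5)
    (hG : MinFactorCritical G k) (hmax : G.maxDegree = n - 2) :
    (Finset.univ.filter (fun v : V => G.degree v = n - 2)).card ≤ 2 ∧
      ∀ u v : V, G.degree u = n - 2 → G.degree v = n - 2 → ¬ G.Adj u v := by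
  classical
  have h2n : 2 ≤ n := by omega
  have key : ∀ u v : V, G.degree u = n - 2 → G.degree v = n - 2 → ¬ G.Adj u v := by
    intro u v hu hv hadj
    obtain ⟨u', hu'ne, hu'⟩ := unique_nonneighbor hn h2n hu
    obtain ⟨v', hv'ne, hv'⟩ := unique_nonneighbor hn h2n hv
    have adj_u : ∀ x, x ≠ u → x ≠ u' → G.Adj u x := by
      intro x h1 h2
      by_contra h
      rcases hu' x h with rfl | rfl
      · exact h1 rfl
      · exact h2 rfl
    have adj_v : ∀ x, x ≠ v → x ≠ v' → G.Adj v x := by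
      intro x h1 h2
      by_contra h
      rcases hv' x h with rfl | rfl
      · exact h1 rfl
      · exact h2 rfl
    have hG2 := hG.2 u v hadj
    rw [FactorCritical] at hG2
    push_neg at hG2
    obtain ⟨S, hScard, hSno⟩ := hG2
    obtain ⟨M, hMv, hM⟩ := hG.1 S hScard
    have huvM : M.Adj u v := matching_avoid hSno M hMv hM
    have hcompl : ∀ x : V, x ∉ S → x ∈ M.verts := by
      intro x hx; rw [hMv]; simpa using hx
    have hpart : ∀ c d : V, M.Adj c d → c ≠ v → c ≠ u → d ≠ u ∧ d ≠ v := by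
      intro c d hcd hcv hcu
      constructor
      · rintro rfl
        exact hcv (matching_unique hM hcd.symm huvM)
      · rintro rfl
        exact hcu (matching_unique hM hcd.symm huvM.symm)
    have final : ∀ a b : V, M.Adj a b → a ≠ u → a ≠ v → a ≠ u' →
        b ≠ u → b ≠ v → b ≠ v' → False := by
      intro a b hab hau hav hau' hbu hbv hbv'
      obtain ⟨M', hM'v, hM'm, hM'uv⟩ := swap_matching hM huvM hab hau hav hbu hbv
        (adj_u a hau hau') (adj_v b hbv hbv')
      exact hM'uv (matching_avoid hSno M' (hM'v.trans hMv) hM'm)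
    have hSc : (Sᶜ : Finset V).card = n - k := by
      rw [Finset.card_compl, hScard, hn]
    have pick : ∀ (F : Finset V), F.card ≤ 4 → ∃ c, c ∈ M.verts ∧ c ∉ F := by
      intro F hF
      have h1 : 0 < (Sᶜ \ F).card := by
        have := Finset.card_le_card_sdiff_add_card (s := Sᶜ) (t := F)
        omega
      obtain ⟨c, hc⟩ := Finset.card_pos.mp h1
      rw [Finset.mem_sdiff] at hc
      exact ⟨c, hcompl c (by simpa using hc.1), hc.2⟩
    have card4 : ∀ x y z w : V, ({x, y, z, w} : Finset V).card ≤ 4 := by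
      intro x y z w
      refine le_trans (Finset.card_insert_le _ _) (Nat.succ_le_succ ?_)
      refine le_trans (Finset.card_insert_le _ _) (Nat.succ_le_succ ?_)
      refine le_trans (Finset.card_insert_le _ _) (Nat.succ_le_succ ?_)
      simp
    obtain ⟨c, hcM, hcF⟩ := pick {u, v, u', v'} (card4 _ _ _ _)
    simp only [Finset.mem_insert, Finset.mem_singleton, not_or] at hcF
    obtain ⟨hcu, hcv, hcu', hcv'⟩ := hcF
    obtain ⟨d, hcd, -⟩ := hM hcM
    obtain ⟨hdu, hdv⟩ := hpart c d hcd hcv hcu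
    by_cases hdv' : d = v'
    · by_cases hdu' : d = u'
      · obtain ⟨c₂, hc2M, hc2F⟩ := pick {u, v, u', c} (card4 _ _ _ _)
        simp only [Finset.mem_insert, Finset.mem_singleton, not_or] at hc2F
        obtain ⟨hc2u, hc2v, hc2u', hc2c⟩ := hc2F
        obtain ⟨d₂, hcd₂, -⟩ := hM hc2M
        obtain ⟨hd2u, hd2v⟩ := hpart c₂ d₂ hcd₂ hc2v hc2u
        have hd2v' : d₂ ≠ v' := by
          rintro rfl
          exact hc2c (matching_unique hM hcd₂.symm (hdv' ▸ hcd.symm))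
        exact final c₂ d₂ hcd₂ hc2u hc2v hc2u' hd2u hd2v hd2v'
      · exact final d c hcd.symm hdu hdv hdu' hcu hcv hcv'
    · exact final c d hcd hcu hcv hcu' hdu hdv hdv'
  refine ⟨?_, key⟩
  by_contra h
  push_neg at h
  obtain ⟨u, hu, v, hv, w, hw, huv, huw, hvw⟩ := Finset.two_lt_card.mp h
  simp only [Finset.mem_filter] at hu hv hw
  obtain ⟨u', hu'ne, hu'⟩ := unique_nonneighbor hn h2n hu.2
  have hv' : v = u' := by
    rcases hu' v (key u v hu.2 hv.2) with rfl | rfl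
    · exact absurd rfl huv
    · rfl
  have hw' : w = u' := by
    rcases hu' w (key u w hu.2 hw.2) with rfl | rfl
    · exact absurd rfl huw
    · rfl
  exact hvw (hv'.trans hw'.symm)
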